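/- Every Collins-Roscoe space is monotonically monolithic. -/
import Mathlib


open Set Cardinal

universe u

/-- `N` is an external network of `S` in `T`. -/
def IsExternalNetwork (T : Type u) [TopologicalSpace T] (N : Set (Set T)) (S : Set T) : Prop :=
  ∀ a ∈ S, ∀ U : Set T, IsOpen U → a ∈ U → ∃ P ∈ N, a ∈ P ∧ P ⊆ U

/-- `T` is monotonically Sokolov: to each countable family of closed sets one can assign
a continuous retraction keeping each member of the family invariant, together with a
countable external network of the image of the retraction, ω-monotonically. -/
def MonotonicallySokolov (T : Type u) [TopologicalSpace T] : Prop :=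
  ∃ (r : Set (Set T) → T → T) (N : Set (Set T) → Set (Set T)),
    (∀ F : Set (Set T), F.Countable → (∀ A ∈ F, IsClosed A) →
      Continuous (r F) ∧ (∀ x, r F (r F x) = r F x) ∧
      (∀ A ∈ F, ∀ x ∈ A, r F x ∈ A) ∧
      (N F).Countable ∧ IsExternalNetwork T (N F) (Set.range (r F))) ∧
    (∀ F G : Set (Set T), F.Countable → (∀ A ∈ F, IsClosed A) →
      G.Countable → (∀ A ∈ G, IsClosed A) → F ⊆ G → N F ⊆ N G) ∧
    (∀ s : ℕ → Set (Set T), (∀ n, (s n).Countable) → (∀ n, ∀ A ∈ s n, IsClosed A) →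
      (∀ n, s n ⊆ s (n + 1)) → N (⋃ n, s n) = ⋃ n, N (s n))

/-- `T` is monotonically ω-monolithic: to each countable set one can assign a countable
external network of its closure, ω-monotonically. -/
def MonotonicallyOmegaMonolithic (T : Type u) [TopologicalSpace T] : Prop :=
  ∃ O : Set T → Set (Set T),
    (∀ A : Set T, A.Countable → (O A).Countable ∧ IsExternalNetwork T (O A) (closure A)) ∧
    (∀ A B : Set T, A.Countable → B.Countable → A ⊆ B → O A ⊆ O B) ∧
    (∀ s : ℕ → Set T, (∀ n, (s n).Countable) → (∀ n, s n ⊆ s (n + 1)) →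
      O (⋃ n, s n) = ⋃ n, O (s n))

/-- `T` is monotonically `κ`-monolithic. -/
def MonotonicallyKappaMonolithic (T : Type u) [TopologicalSpace T] (κ : Cardinal.{u}) : Prop :=
  ∃ O : Set T → Set (Set T),
    (∀ A : Set T, #A ≤ κ →
      #(O A) ≤ #A + ℵ₀ ∧ IsExternalNetwork T (O A) (closure A)) ∧
    (∀ A B : Set T, #A ≤ κ → #B ≤ κ → A ⊆ B → O A ⊆ O B) ∧
    (∀ (ι : Type u) [LinearOrder ι], #ι ≤ κ →
      ∀ A : ι → Set T, Monotone A → (∀ i, #(A i) ≤ κ) →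
        O (⋃ i, A i) = ⋃ i, O (A i))

/-- `T` is monotonically monolithic: monotonically `κ`-monolithic for every infinite `κ`. -/
def MonotonicallyMonolithic (T : Type u) [TopologicalSpace T] : Prop :=
  ∀ κ : Cardinal.{u}, ℵ₀ ≤ κ → MonotonicallyKappaMonolithic T κ

/-- `T` is a Collins-Roscoe space. -/
def CollinsRoscoe (T : Type u) [TopologicalSpace T] : Prop :=
  ∃ O : T → Set (Set T), (∀ x, (O x).Countable) ∧
    ∀ A : Set T, IsExternalNetwork T (⋃ x ∈ A, O x) (closure A)

theorem monotonicallyMonolithic_of_collinsRoscoe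
    (T : Type u) [TopologicalSpace T] (h : CollinsRoscoe T) :
    MonotonicallyMonolithic T := by
  obtain ⟨O, hcount, hnet⟩ := h
  intro κ hκ
  refine ⟨fun A => ⋃ x ∈ A, O x, fun A _ => ⟨?_, hnet A⟩,
    fun A B _ _ hAB => Set.biUnion_subset_biUnion_left hAB,
    fun ι _ _ A _ _ => Set.biUnion_iUnion A O⟩
  calc #(⋃ x ∈ A, O x) ≤ #A * ⨆ x : A, #(O x) := Cardinal.mk_biUnion_le O A
    _ ≤ (#A + ℵ₀) * (#A + ℵ₀) := by
        refine mul_le_mul' le_self_add (ciSup_le' fun x => ?_)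
        exact le_trans ((Cardinal.mk_le_aleph0_iff.mpr (hcount x))) le_add_self
    _ = #A + ℵ₀ := Cardinal.mul_eq_self le_add_self
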